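/- For fixed real ε ∈ (-1,-1/2), fixed u₀ > 0, and any integer n > 0, the quantity m^n · u^{m-1} |f^{(m)}(u)| / ((1+ε) m!) tends to 0 as m → ∞, uniformly for u ∈ (0, u₀], where f(u) = (1/Γ(1+ε)) ∫₀^∞ x^{ε-1} ln(xu+1) e^{-x} dx. -/

import Mathlib

open MeasureTheory Real
open Set Filter

noncomputable def Dk : ℕ → ℝ → ℝ → ℝ
  | 0, x, v => Real.log (x * v + 1)
  | (k+1), x, v => (-1 : ℝ) ^ k * (Nat.factorial k) * x ^ (k+1) / (x * v + 1) ^ (k+1)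

noncomputable def itg (ε : ℝ) (m : ℕ) (v x : ℝ) : ℝ :=
  x ^ (ε - 1) * Dk m x v * Real.exp (-x)

lemma Dk_hasDerivAt (m : ℕ) (x v : ℝ) (hv : 0 < x * v + 1) :
    HasDerivAt (fun w => Dk m x w) (Dk (m+1) x v) v := by
  cases m with
  | zero =>
    have h1 : HasDerivAt (fun w : ℝ => x * w + 1) x v := by
      simpa using ((hasDerivAt_id v).const_mul x).add_const 1
    have := (Real.hasDerivAt_log (ne_of_gt hv)).comp v h1
    simpa [Dk, div_eq_mul_inv, mul_comm, Function.comp_def] using this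
  | succ k =>
    have h1 : HasDerivAt (fun w : ℝ => x * w + 1) x v := by
      simpa using ((hasDerivAt_id v).const_mul x).add_const 1
    have h2 : HasDerivAt (fun w : ℝ => (x * w + 1) ^ (k+1))
        ((k+1 : ℕ) * (x * v + 1) ^ k * x) v := by
      simpa [Function.comp_def] using (hasDerivAt_pow (k+1) (x*v+1)).comp v h1
    have h3 : HasDerivAt (fun w => Dk (k+1) x w)
        ((0 * (x*v+1)^(k+1) - ((-1:ℝ)^k * (Nat.factorial k) * x ^ (k+1)) * ((k+1:ℕ) * (x*v+1)^k * x)) / ((x*v+1)^(k+1))^2) v := by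
      exact (hasDerivAt_const v _).div h2 (pow_ne_zero _ (ne_of_gt hv))
    convert h3 using 1
    have hA : x * v + 1 ≠ 0 := ne_of_gt hv
    simp only [Dk]
    rw [Nat.factorial_succ]
    field_simp
    push_cast
    ring

lemma itg_meas (ε : ℝ) (m : ℕ) (v : ℝ) : Measurable (itg ε m v) := by
  cases m with
  | zero =>
    show Measurable fun x : ℝ => x ^ (ε-1) * Real.log (x*v+1) * Real.exp (-x)
    have hl := Real.measurable_log
    fun_prop [Real.measurable_log]
  | succ k =>
    show Measurable fun x : ℝ =>
      x ^ (ε-1) * ((-1:ℝ)^k * (Nat.factorial k) * x ^ (k+1) / (x * v + 1) ^ (k+1)) * Real.exp (-x)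
    fun_prop

lemma Dk_abs_eq (m : ℕ) (x v : ℝ) (hx : 0 < x) (hxv : 0 < x * v + 1) :
    |Dk (m+1) x v| = (Nat.factorial m) * x ^ (m+1) / (x * v + 1) ^ (m+1) := by
  simp [Dk, abs_div, abs_mul, abs_pow, abs_of_pos hx, abs_of_pos hxv, abs_neg]

lemma Dk_abs_le (m : ℕ) (x v w : ℝ) (hx : 0 < x) (hw : 0 < w) (hv : w ≤ v) :
    |Dk (m+1) x v| ≤ (Nat.factorial m) * x / w ^ m := by
  have hxv : (0:ℝ) < x * v + 1 := by nlinarith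
  have hxv1 : (1:ℝ) ≤ x * v + 1 := by nlinarith
  rw [Dk_abs_eq m x v hx hxv]
  have key : x ^ (m+1) / (x * v + 1) ^ (m+1) ≤ x / w ^ m := by
    rw [div_le_div_iff₀ (by positivity) (by positivity)]
    have h1 : (x*w)^m ≤ (x*v+1)^m := pow_le_pow_left₀ (by positivity) (by nlinarith) m
    have h2 : (0:ℝ) ≤ (x*v+1)^m := by positivity
    calc x ^ (m+1) * w ^ m = x * (x*w)^m := by rw [mul_pow]; ring
      _ ≤ x * ((x*v+1)^m * (x*v+1)) := by
          have h3 : (x*w)^m ≤ (x*v+1)^m*(x*v+1) := by nlinarith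
          exact mul_le_mul_of_nonneg_left h3 hx.le
      _ = x * (x*v+1)^(m+1) := by rw [pow_succ]
  calc (Nat.factorial m : ℝ) * x ^ (m+1) / (x * v + 1) ^ (m+1)
      = (Nat.factorial m : ℝ) * (x ^ (m+1) / (x * v + 1) ^ (m+1)) := by ring
    _ ≤ (Nat.factorial m : ℝ) * (x / w ^ m) :=
        mul_le_mul_of_nonneg_left key (by positivity)
    _ = (Nat.factorial m : ℝ) * x / w ^ m := by ring

lemma base_integrable (ε : ℝ) (hε : -1 < ε) (b : ℝ) (hb : 0 < b) :
    IntegrableOn (fun x : ℝ => x ^ ε * Real.exp (-(b * x))) (Ioi 0) := by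
  have := integrableOn_rpow_mul_exp_neg_mul_rpow (p := 1) (s := ε) (b := b) hε one_pos hb
  refine this.congr_fun (fun x hx => ?_) measurableSet_Ioi
  simp only [Real.rpow_one, neg_mul]

lemma gauss_int (ε : ℝ) (hε : -1 < ε) :
    IntegrableOn (fun x : ℝ => x ^ ε * Real.exp (-x)) (Ioi 0) := by
  have := base_integrable ε hε 1 one_pos
  refine this.congr_fun (fun x hx => ?_) measurableSet_Ioi
  simp only [one_mul]

lemma itg_abs_le (ε : ℝ) (m : ℕ) (x v w : ℝ) (hx : 0 < x) (hw : 0 < w) (hv : w ≤ v) :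
    |itg ε (m+1) v x| ≤ (Nat.factorial m / w ^ m) * (x ^ ε * Real.exp (-x)) := by
  have hxp : (0:ℝ) < x ^ (ε-1) := Real.rpow_pos_of_pos hx _
  have hxe : x ^ (ε-1) * x = x ^ ε := by
    rw [Real.rpow_sub_one (ne_of_gt hx), div_mul_cancel₀ _ (ne_of_gt hx)]
  unfold itg
  rw [abs_mul, abs_mul, abs_of_pos hxp, abs_of_pos (Real.exp_pos _)]
  calc x ^ (ε-1) * |Dk (m+1) x v| * Real.exp (-x)
      ≤ x ^ (ε-1) * ((Nat.factorial m) * x / w ^ m) * Real.exp (-x) := by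
        have := Dk_abs_le m x v w hx hw hv
        exact mul_le_mul_of_nonneg_right
          (mul_le_mul_of_nonneg_left this hxp.le) (Real.exp_pos _).le
    _ = (Nat.factorial m / w ^ m) * (x ^ ε * Real.exp (-x)) := by
        rw [← hxe]; ring

lemma itg_integrable (ε : ℝ) (hε : -1 < ε) (m : ℕ) (v : ℝ) (hv : 0 < v) :
    IntegrableOn (itg ε m v) (Ioi 0) := by
  have hxe : ∀ x : ℝ, 0 < x → x ^ (ε-1) * x = x ^ ε := fun x hx => by
    rw [Real.rpow_sub_one (ne_of_gt hx), div_mul_cancel₀ _ (ne_of_gt hx)]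
  have base : IntegrableOn (fun x : ℝ => x ^ ε * Real.exp (-x)) (Ioi 0) := gauss_int ε hε
  cases m with
  | zero =>
    refine Integrable.mono (base.const_mul v) ((itg_meas ε 0 v).aestronglyMeasurable) ?_
    filter_upwards [ae_restrict_mem measurableSet_Ioi] with x hx
    have hx : (0:ℝ) < x := hx
    have hxp : (0:ℝ) < x ^ (ε-1) := Real.rpow_pos_of_pos hx _
    have hlog : |Real.log (x*v+1)| ≤ x * v := by
      rw [abs_of_nonneg (Real.log_nonneg (by nlinarith))]
      have := Real.log_le_sub_one_of_pos (show (0:ℝ) < x*v+1 by nlinarith)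
      linarith
    show |itg ε 0 v x| ≤ ‖v * (x ^ ε * Real.exp (-x))‖
    have hb : |itg ε 0 v x| ≤ v * (x ^ ε * Real.exp (-x)) := by
      unfold itg Dk
      rw [abs_mul, abs_mul, abs_of_pos hxp, abs_of_pos (Real.exp_pos _)]
      calc x ^ (ε-1) * |Real.log (x*v+1)| * Real.exp (-x)
          ≤ x ^ (ε-1) * (x * v) * Real.exp (-x) :=
            mul_le_mul_of_nonneg_right
              (mul_le_mul_of_nonneg_left hlog hxp.le) (Real.exp_pos _).le
        _ = v * (x ^ ε * Real.exp (-x)) := by rw [← hxe x hx]; ring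
    refine hb.trans (le_abs_self _)
  | succ k =>
    refine Integrable.mono (base.const_mul ((Nat.factorial k) / v ^ k))
      ((itg_meas ε (k+1) v).aestronglyMeasurable) ?_
    filter_upwards [ae_restrict_mem measurableSet_Ioi] with x hx
    have hx : (0:ℝ) < x := hx
    exact (itg_abs_le ε k x v v hx hv le_rfl).trans (le_abs_self _)

lemma hasDerivAt_phi (ε : ℝ) (hε : -1 < ε) (m : ℕ) (u : ℝ) (hu : 0 < u) :
    HasDerivAt (fun v => ∫ x in Ioi (0:ℝ), itg ε m v x)
      (∫ x in Ioi (0:ℝ), itg ε (m+1) u x) u := by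
  have hball : ∀ v ∈ Metric.ball u (u/2), u/2 < v := by
    intro v hv
    rw [Metric.mem_ball, Real.dist_eq, abs_sub_lt_iff] at hv
    linarith [hv.2]
  have key := hasDerivAt_integral_of_dominated_loc_of_deriv_le
    (μ := volume.restrict (Ioi (0:ℝ))) (x₀ := u)
    (F := fun v x => itg ε m v x) (F' := fun v x => itg ε (m+1) v x)
    (bound := fun x => (Nat.factorial m / (u/2) ^ m) * (x ^ ε * Real.exp (-x)))
    (Metric.ball_mem_nhds u (half_pos hu))
    (Filter.Eventually.of_forall fun v => (itg_meas ε m v).aestronglyMeasurable)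
    (itg_integrable ε hε m u hu)
    ((itg_meas ε (m+1) u).aestronglyMeasurable)
    ?_ (((gauss_int ε hε).const_mul _)) ?_
  · exact key.2
  · filter_upwards [ae_restrict_mem measurableSet_Ioi] with x hx
    have hx : (0:ℝ) < x := hx
    intro v hv
    exact itg_abs_le ε m x v (u/2) hx (half_pos hu) (hball v hv).le
  · filter_upwards [ae_restrict_mem measurableSet_Ioi] with x hx
    have hx : (0:ℝ) < x := hx
    intro v hv
    have hv' : 0 < v := lt_trans (half_pos hu) (hball v hv)
    have hxv : 0 < x * v + 1 := by nlinarith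
    have hD := Dk_hasDerivAt m x v hxv
    have := (hD.const_mul (x ^ (ε-1))).mul_const (Real.exp (-x))
    exact this

lemma amgm_aux (a b : ℝ) (ha : 0 ≤ a) (hb : 0 ≤ b) : 2 * Real.sqrt (a*b) ≤ a + b := by
  have h1 : Real.sqrt (a*b) = Real.sqrt a * Real.sqrt b := Real.sqrt_mul ha b
  nlinarith [sq_nonneg (Real.sqrt a - Real.sqrt b), Real.sq_sqrt ha, Real.sq_sqrt hb]

lemma amgm (k : ℕ) (x u₀ : ℝ) (hx : 0 ≤ x) (hu₀ : 0 < u₀) :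
    Real.sqrt (2*k/u₀) - 1/(2*u₀) ≤ k/(x*u₀+1) + x/2 := by
  set A : ℝ := x*u₀+1 with hA
  have hApos : 0 < A := by positivity
  have ha : (0:ℝ) ≤ k/A := by positivity
  have hb : (0:ℝ) ≤ A/(2*u₀) := by positivity
  have h2 := amgm_aux (k/A) (A/(2*u₀)) ha hb
  have hab : (k:ℝ)/A * (A/(2*u₀)) = k/(2*u₀) := by
    field_simp
  have h3 : Real.sqrt (2*k/u₀) = 2 * Real.sqrt ((k:ℝ)/(2*u₀)) := by
    rw [show (2*(k:ℝ)/u₀) = 2^2 * ((k:ℝ)/(2*u₀)) by field_simp,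
      Real.sqrt_mul (by norm_num), Real.sqrt_sq (by norm_num)]
  have h4 : A/(2*u₀) = x/2 + 1/(2*u₀) := by
    rw [hA]; field_simp
  rw [h3]
  rw [hab] at h2
  linarith [h2, h4 ▸ h2]

lemma pointwise_bound (ε : ℝ) (k : ℕ) (x u u₀ : ℝ) (hx : 0 < x) (hu : 0 < u)
    (huu₀ : u ≤ u₀) :
    u^k * |itg ε (k+1) u x| ≤
      (Nat.factorial k * (Real.exp (1/(2*u₀)) * Real.exp (-Real.sqrt (2*k/u₀)))) *
        (x ^ ε * Real.exp (-(1/2*x))) := by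
  have hu₀ : 0 < u₀ := lt_of_lt_of_le hu huu₀
  have hxu : (0:ℝ) < x*u+1 := by nlinarith
  have hxu0 : (0:ℝ) < x*u₀+1 := by nlinarith
  have hxp : (0:ℝ) < x ^ (ε-1) := Real.rpow_pos_of_pos hx _
  have hxe : x ^ (ε-1) * x = x ^ ε := by
    rw [Real.rpow_sub_one (ne_of_gt hx), div_mul_cancel₀ _ (ne_of_gt hx)]
  have eq1 : u^k * |itg ε (k+1) u x| =
      (Nat.factorial k : ℝ) * (x ^ ε * ((x*u/(x*u+1))^k * (x*u+1)⁻¹ * Real.exp (-x))) := by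
    unfold itg
    rw [abs_mul, abs_mul, Dk_abs_eq k x u hx hxu, abs_of_pos hxp,
      abs_of_pos (Real.exp_pos _), ← hxe]
    rw [div_pow]
    field_simp
    ring
  rw [eq1]
  have step1 : (x*u/(x*u+1))^k * (x*u+1)⁻¹ ≤ (x*u₀/(x*u₀+1))^k := by
    have hb : x*u/(x*u+1) ≤ x*u₀/(x*u₀+1) := by
      rw [div_le_div_iff₀ hxu hxu0]; nlinarith
    have h1 : (x*u/(x*u+1))^k ≤ (x*u₀/(x*u₀+1))^k :=
      pow_le_pow_left₀ (by positivity) hb k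
    have h2 : (x*u+1)⁻¹ ≤ 1 := by
      rw [inv_le_one_iff₀]; right; nlinarith
    calc (x*u/(x*u+1))^k * (x*u+1)⁻¹ ≤ (x*u₀/(x*u₀+1))^k * 1 := by
          apply mul_le_mul h1 h2 (by positivity) (by positivity)
      _ = (x*u₀/(x*u₀+1))^k := mul_one _
  have step2 : (x*u₀/(x*u₀+1))^k ≤ Real.exp (-((k:ℝ)/(x*u₀+1))) := by
    have hb : x*u₀/(x*u₀+1) ≤ Real.exp (-(1/(x*u₀+1))) := by
      have := Real.add_one_le_exp (-(1/(x*u₀+1)))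
      have he : x*u₀/(x*u₀+1) = -(1/(x*u₀+1)) + 1 := by field_simp; ring
      linarith [he ▸ le_refl (x*u₀/(x*u₀+1))]
    calc (x*u₀/(x*u₀+1))^k ≤ (Real.exp (-(1/(x*u₀+1))))^k :=
          pow_le_pow_left₀ (by positivity) hb k
      _ = Real.exp ((k:ℝ) * -(1/(x*u₀+1))) := (Real.exp_nat_mul _ k).symm
      _ = Real.exp (-((k:ℝ)/(x*u₀+1))) := by congr 1; field_simp
  have step3 : Real.exp (-((k:ℝ)/(x*u₀+1))) * Real.exp (-x) ≤
      Real.exp (1/(2*u₀)) * Real.exp (-Real.sqrt (2*k/u₀)) * Real.exp (-(1/2*x)) := by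
    rw [← Real.exp_add, ← Real.exp_add, ← Real.exp_add, Real.exp_le_exp]
    have := amgm k x u₀ hx.le hu₀
    linarith
  calc (Nat.factorial k : ℝ) * (x ^ ε * ((x*u/(x*u+1))^k * (x*u+1)⁻¹ * Real.exp (-x)))
      ≤ (Nat.factorial k : ℝ) * (x ^ ε * ((x*u₀/(x*u₀+1))^k * Real.exp (-x))) := by
        have h := mul_le_mul_of_nonneg_right step1 (Real.exp_pos (-x)).le
        gcongr
    _ ≤ (Nat.factorial k : ℝ) * (x ^ ε * (Real.exp (-((k:ℝ)/(x*u₀+1))) * Real.exp (-x))) := by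
        have h := mul_le_mul_of_nonneg_right step2 (Real.exp_pos (-x)).le
        gcongr
    _ ≤ (Nat.factorial k : ℝ) * (x ^ ε *
          (Real.exp (1/(2*u₀)) * Real.exp (-Real.sqrt (2*k/u₀)) * Real.exp (-(1/2*x)))) := by
        have h := step3
        gcongr
    _ = (Nat.factorial k * (Real.exp (1/(2*u₀)) * Real.exp (-Real.sqrt (2*k/u₀)))) *
        (x ^ ε * Real.exp (-(1/2*x))) := by ring

lemma key_bound (ε : ℝ) (hε : -1 < ε) (u₀ : ℝ) (hu₀ : 0 < u₀) (k : ℕ) (u : ℝ)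
    (hu : 0 < u) (huu₀ : u ≤ u₀) :
    u^k * |∫ x in Ioi (0:ℝ), itg ε (k+1) u x| ≤
      (Nat.factorial k * (Real.exp (1/(2*u₀)) * Real.exp (-Real.sqrt (2*k/u₀)))) *
        ∫ x in Ioi (0:ℝ), x ^ ε * Real.exp (-(1/2*x)) := by
  have hint := itg_integrable ε hε (k+1) u hu
  have hbase : IntegrableOn (fun x : ℝ => x ^ ε * Real.exp (-(1/2*x))) (Ioi 0) :=
    base_integrable ε hε (1/2) (by norm_num)
  have h1 : |∫ x in Ioi (0:ℝ), itg ε (k+1) u x| ≤ ∫ x in Ioi (0:ℝ), |itg ε (k+1) u x| := by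
    simpa [Real.norm_eq_abs] using
      norm_integral_le_integral_norm (μ := volume.restrict (Ioi (0:ℝ))) (itg ε (k+1) u)
  have h2 : u^k * |∫ x in Ioi (0:ℝ), itg ε (k+1) u x| ≤
      ∫ x in Ioi (0:ℝ), u^k * |itg ε (k+1) u x| := by
    rw [integral_const_mul]
    exact mul_le_mul_of_nonneg_left h1 (by positivity)
  refine h2.trans ?_
  rw [← integral_const_mul]
  refine setIntegral_mono_on (hint.abs.const_mul _) (hbase.const_mul _)
    measurableSet_Ioi (fun x hx => ?_)
  exact pointwise_bound ε k x u u₀ hx hu huu₀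

lemma iter_formula (ε : ℝ) (hε : -1 < ε) (m : ℕ) :
    ∀ u : ℝ, 0 < u →
      iteratedDeriv m
        (fun v : ℝ =>
          (1 / Real.Gamma (1 + ε)) *
            ∫ x in Ioi (0:ℝ), x ^ (ε - 1) * Real.log (x * v + 1) * Real.exp (-x)) u
      = (1 / Real.Gamma (1 + ε)) * ∫ x in Ioi (0:ℝ), itg ε m u x := by
  induction m with
  | zero =>
    intro u hu
    rw [iteratedDeriv_zero]
    rfl
  | succ m ih =>
    intro u hu
    rw [iteratedDeriv_succ]
    have hev : (iteratedDeriv m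
        (fun v : ℝ =>
          (1 / Real.Gamma (1 + ε)) *
            ∫ x in Ioi (0:ℝ), x ^ (ε - 1) * Real.log (x * v + 1) * Real.exp (-x)))
        =ᶠ[nhds u]
        (fun v => (1 / Real.Gamma (1 + ε)) * ∫ x in Ioi (0:ℝ), itg ε m v x) :=
      Filter.eventuallyEq_of_mem (Ioi_mem_nhds hu) (fun v hv => ih v hv)
    rw [hev.deriv_eq]
    exact ((hasDerivAt_phi ε hε m u hu).const_mul (1 / Real.Gamma (1 + ε))).deriv

lemma tendsto_G (u₀ : ℝ) (hu₀ : 0 < u₀) (j : ℕ) :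
    Filter.Tendsto (fun k : ℕ => ((k:ℝ)+1)^j * Real.exp (-Real.sqrt (2*k/u₀)))
      Filter.atTop (nhds 0) := by
  have hc : 0 < Real.sqrt (2/u₀) := Real.sqrt_pos.mpr (by positivity)
  set c := Real.sqrt (2/u₀) with hcdef
  have hs : ∀ k : ℕ, Real.sqrt (2*k/u₀) = c * Real.sqrt k := fun k => by
    rw [hcdef, ← Real.sqrt_mul (by positivity : (0:ℝ) ≤ 2/u₀) ((k:ℕ):ℝ)]
    congr 1
    ring
  have hy : Tendsto (fun k : ℕ => Real.sqrt k) atTop atTop := by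
    refine tendsto_atTop_atTop.mpr fun b => ⟨Nat.ceil (b^2), fun k hk => ?_⟩
    have h1 : (b^2:ℝ) ≤ k := le_trans (Nat.le_ceil _) (Nat.cast_le.mpr hk)
    calc b ≤ |b| := le_abs_self b
      _ = Real.sqrt (b^2) := (Real.sqrt_sq_eq_abs b).symm
      _ ≤ Real.sqrt k := Real.sqrt_le_sqrt h1
  have h0 : Tendsto (fun y : ℝ => y ^ (((2*j : ℕ)):ℝ) * Real.exp (-c*y)) atTop (nhds 0) :=
    tendsto_rpow_mul_exp_neg_mul_atTop_nhds_zero _ c hc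
  have hcomp := (h0.comp hy).const_mul ((2:ℝ)^j)
  rw [mul_zero] at hcomp
  simp only [Function.comp] at hcomp
  refine squeeze_zero' ?_ ?_ hcomp
  · filter_upwards with k
    positivity
  · filter_upwards [eventually_ge_atTop 1] with k hk
    have hk1 : (1:ℝ) ≤ k := by exact_mod_cast hk
    have hknn : (0:ℝ) ≤ k := by linarith
    have e1 : ((k:ℝ)+1)^j ≤ (2*(k:ℝ))^j := pow_le_pow_left₀ (by positivity) (by linarith) j
    have e2 : (Real.sqrt k) ^ (((2*j:ℕ)):ℝ) = ((k:ℝ))^j := by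
      rw [Real.rpow_natCast, pow_mul, Real.sq_sqrt hknn]
    rw [hs k]
    calc ((k:ℝ)+1)^j * Real.exp (-(c*Real.sqrt k))
        ≤ (2*(k:ℝ))^j * Real.exp (-(c*Real.sqrt k)) :=
          mul_le_mul_of_nonneg_right e1 (Real.exp_pos _).le
      _ = 2^j * (Real.sqrt k ^ (((2*j:ℕ)):ℝ) * Real.exp (-c*Real.sqrt k)) := by
          rw [e2, mul_pow, neg_mul]; ring

theorem stmt8 (ε : ℝ) (hε : ε ∈ Set.Ioo (-1 : ℝ) (-1/2)) (u₀ : ℝ) (hu₀ : 0 < u₀)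
    (n : ℕ) (hn : 0 < n) :
    ∀ δ > (0 : ℝ), ∃ M : ℕ, ∀ m ≥ M, ∀ u ∈ Set.Ioc (0 : ℝ) u₀,
      (m : ℝ) ^ n * u ^ (m - 1) *
          |iteratedDeriv m
              (fun v : ℝ =>
                (1 / Real.Gamma (1 + ε)) *
                  ∫ x in Set.Ioi (0:ℝ), x ^ (ε - 1) * Real.log (x * v + 1) * Real.exp (-x))
              u| /
        ((1 + ε) * (Nat.factorial m : ℝ)) < δ := by
  obtain ⟨hε1, hε2⟩ := hε
  have h1ε : 0 < 1 + ε := by linarith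
  have hΓ : 0 < Real.Gamma (1+ε) := Real.Gamma_pos_of_pos h1ε
  have hC : 0 < 1 / Real.Gamma (1+ε) := by positivity
  have hJ : 0 ≤ ∫ x in Ioi (0:ℝ), x ^ ε * Real.exp (-(1/2*x)) :=
    setIntegral_nonneg measurableSet_Ioi (fun x hx => by
      have : (0:ℝ) < x := hx
      positivity)
  intro δ hδ
  have hT : Tendsto (fun k : ℕ =>
      (1 / Real.Gamma (1+ε)) * Real.exp (1/(2*u₀)) *
        (∫ x in Ioi (0:ℝ), x ^ ε * Real.exp (-(1/2*x))) / (1+ε) *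
        (((k:ℝ)+1)^(n-1) * Real.exp (-Real.sqrt (2*k/u₀)))) atTop (nhds 0) := by
    have := (tendsto_G u₀ hu₀ (n-1)).const_mul
      ((1 / Real.Gamma (1+ε)) * Real.exp (1/(2*u₀)) *
        (∫ x in Ioi (0:ℝ), x ^ ε * Real.exp (-(1/2*x))) / (1+ε))
    rwa [mul_zero] at this
  obtain ⟨M, hM⟩ := Filter.eventually_atTop.mp (hT.eventually_lt_const hδ)
  refine ⟨M+1, fun m hm u hu => ?_⟩
  obtain ⟨k, rfl⟩ : ∃ k, m = k+1 := ⟨m-1, by omega⟩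
  have hkM : M ≤ k := by omega
  have hu0 : 0 < u := hu.1
  have huu₀ : u ≤ u₀ := hu.2
  rw [iter_formula ε hε1 (k+1) u hu0]
  refine lt_of_le_of_lt ?_ (hM k hkM)
  have hd : (0:ℝ) < (1+ε) * (Nat.factorial (k+1) : ℝ) := by positivity
  rw [abs_mul, abs_of_pos hC, div_le_iff₀ hd]
  have key := key_bound ε hε1 u₀ hu₀ k u hu0 huu₀
  have hpow : ((k:ℝ)+1)^(n-1) * ((k:ℝ)+1) = ((k:ℝ)+1)^n := by
    rw [← pow_succ]
    congr 1
    omega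
  have hfacteq : ((Nat.factorial (k+1) : ℕ):ℝ) = ((k:ℝ)+1) * (Nat.factorial k:ℝ) := by
    rw [Nat.factorial_succ]; push_cast; ring
  have hcast : ((k+1 : ℕ):ℝ) = (k:ℝ)+1 := by push_cast; ring
  have hidx : k + 1 - 1 = k := rfl
  rw [hidx, hcast, hfacteq]
  calc ((k:ℝ)+1)^n * u^k * (1 / Real.Gamma (1+ε) * |∫ x in Ioi (0:ℝ), itg ε (k+1) u x|)
      = (((k:ℝ)+1)^n * (1 / Real.Gamma (1+ε))) *
          (u^k * |∫ x in Ioi (0:ℝ), itg ε (k+1) u x|) := by ring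
    _ ≤ (((k:ℝ)+1)^n * (1 / Real.Gamma (1+ε))) *
          ((Nat.factorial k * (Real.exp (1/(2*u₀)) * Real.exp (-Real.sqrt (2*k/u₀)))) *
            ∫ x in Ioi (0:ℝ), x ^ ε * Real.exp (-(1/2*x))) :=
        mul_le_mul_of_nonneg_left key (by positivity)
    _ = 1 / Real.Gamma (1+ε) * Real.exp (1/(2*u₀)) *
          (∫ x in Ioi (0:ℝ), x ^ ε * Real.exp (-(1/2*x))) / (1+ε) *
          (((k:ℝ)+1)^(n-1) * Real.exp (-Real.sqrt (2*k/u₀))) *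
          ((1+ε) * (((k:ℝ)+1) * (Nat.factorial k:ℝ))) := by
        rw [← hpow]
        field_simp
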